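/- Let m ≥ 1, d ≥ 0, and suppose S is a subset of Δ(m−1, 2d+1) ⊆ ℤ_{≥0}^m that is 2d-separated. Then |S| ≤ 4^{m−1}. -/

import Mathlib

lemma list_range_map_sum (n : ℕ) (f : ℕ → ℕ) :
    ((List.range n).map f).sum = ∑ i ∈ Finset.range n, f i := rfl

/-- Stars and bars for `List.Nat.antidiagonalTuple`. -/
lemma length_antidiagonalTuple_succ :
    ∀ m r : ℕ, (List.Nat.antidiagonalTuple (m + 1) r).length = (r + m).choose m := by
  intro m
  induction m with
  | zero => intro r; simp
  | succ m ih =>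
    intro r
    show (List.Nat.antidiagonalTuple (m + 1 + 1) r).length = _
    rw [List.Nat.antidiagonalTuple, List.length_flatMap]
    have h1 : ∀ ni : ℕ × ℕ,
        ((List.Nat.antidiagonalTuple (m + 1) ni.2).map
            fun x : Fin (m + 1) → ℕ => (Fin.cons ni.1 x : Fin (m + 2) → ℕ)).length
          = (ni.2 + m).choose m := by
      intro ni; rw [List.length_map, ih]
    rw [List.Nat.antidiagonal, List.map_map]
    have h2 : ((List.range (r + 1)).map
          ((List.length ∘ fun ni : ℕ × ℕ =>
            (List.Nat.antidiagonalTuple (m + 1) ni.2).map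
              fun x : Fin (m + 1) → ℕ => (Fin.cons ni.1 x : Fin (m + 2) → ℕ)) ∘
              fun i => (i, r - i))).sum
        = ∑ i ∈ Finset.range (r + 1), ((r - i) + m).choose m := by
      rw [← list_range_map_sum (r + 1) fun i => ((r - i) + m).choose m]
      congr 1
      apply List.map_congr_left
      intro i _
      simpa using h1 (i, r - i)
    refine h2.trans ?_
    have h4 := Finset.sum_range_reflect (fun j => (j + m).choose m) (r + 1)
    simp only [Nat.add_sub_cancel] at h4
    rw [h4, Nat.sum_range_add_choose r m]
    congr 1

lemma card_antidiagonalTuple_succ (m r : ℕ) :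
    (Finset.Nat.antidiagonalTuple (m + 1) r).card = (r + m).choose m := by
  classical
  have : (Finset.Nat.antidiagonalTuple (m + 1) r).card
      = (List.Nat.antidiagonalTuple (m + 1) r).length := rfl
  rw [this, length_antidiagonalTuple_succ]

/-- Key binomial inequality: `C(3d+1+n, n) ≤ 3^n * C(d+n, n)`. -/
lemma choose_three_le : ∀ n d : ℕ, (3 * d + 1 + n).choose n ≤ 3 ^ n * (d + n).choose n := by
  intro n
  induction n with
  | zero => intro d; simp
  | succ n ih =>
    intro d
    have key : (3 * d + 1 + (n + 1)).choose (n + 1) * (n + 1)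
        ≤ (3 ^ (n + 1) * (d + (n + 1)).choose (n + 1)) * (n + 1) := by
      have e1 : (3 * d + 1 + (n + 1)).choose (n + 1) * (n + 1)
          = (3 * d + 1 + n + 1) * (3 * d + 1 + n).choose n := by
        have := Nat.add_one_mul_choose_eq (3 * d + 1 + n) n
        rw [show 3 * d + 1 + (n + 1) = 3 * d + 1 + n + 1 by ring]
        omega
      have e2 : (d + (n + 1)).choose (n + 1) * (n + 1)
          = (d + n + 1) * (d + n).choose n := by
        have := Nat.add_one_mul_choose_eq (d + n) n
        rw [show d + (n + 1) = d + n + 1 by ring]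
        omega
      rw [e1]
      calc (3 * d + 1 + n + 1) * (3 * d + 1 + n).choose n
          ≤ (3 * (d + n + 1)) * (3 ^ n * (d + n).choose n) := by
            apply Nat.mul_le_mul _ (ih d); omega
        _ = 3 ^ (n + 1) * ((d + n + 1) * (d + n).choose n) := by ring
        _ = (3 ^ (n + 1) * (d + (n + 1)).choose (n + 1)) * (n + 1) := by
            rw [← e2]; ring
    exact Nat.le_of_mul_le_mul_right key (Nat.succ_pos n)

/-- Let `m ≥ 1`, `d ≥ 0`, and let `S ⊆ Δ(m−1, 2d+1) ⊆ ℤ_{≥0}^m` be `2d`-separated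
(distinct points at ℓ¹-distance strictly greater than `2d`). Then `|S| ≤ 4^{m−1}`. -/
theorem stmt13 (m d : ℕ) (hm : 1 ≤ m) (S : Finset (Fin m → ℕ))
    (hS : ∀ v ∈ S, ∑ j, v j = 2 * d + 1)
    (hsep : ∀ v ∈ S, ∀ w ∈ S, v ≠ w → 2 * d < ∑ j, Nat.dist (v j) (w j)) :
    S.card ≤ 4 ^ (m - 1) := by
  classical
  obtain ⟨n, rfl⟩ : ∃ n, m = n + 1 := ⟨m - 1, by omega⟩
  set T := Finset.Nat.antidiagonalTuple (n + 1) d with hT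
  set U := Finset.Nat.antidiagonalTuple (n + 1) (3 * d + 1) with hU
  -- the map (v, c) ↦ v + c sends S ×ˢ T injectively into U
  have hmaps : ∀ p ∈ S ×ˢ T, (p.1 + p.2 : Fin (n + 1) → ℕ) ∈ U := by
    rintro ⟨v, c⟩ hp
    rw [Finset.mem_product] at hp
    rw [hU, Finset.Nat.mem_antidiagonalTuple]
    have hv := hS v hp.1
    have hc : ∑ j, c j = d := Finset.Nat.mem_antidiagonalTuple.mp hp.2
    have : ∑ j, (v + c) j = ∑ j, v j + ∑ j, c j := by
      simp [Finset.sum_add_distrib]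
    rw [this, hv, hc]; ring
  have hinj : Set.InjOn (fun p : (Fin (n + 1) → ℕ) × (Fin (n + 1) → ℕ) => p.1 + p.2)
      ↑(S ×ˢ T) := by
    rintro ⟨v, c⟩ hp ⟨w, c'⟩ hq heq
    rw [Finset.coe_product] at hp hq
    obtain ⟨hv, hc⟩ := hp
    obtain ⟨hw, hc'⟩ := hq
    simp only at heq
    have hpt : ∀ j, v j + c j = w j + c' j := fun j => congrFun heq j
    have hc1 : ∑ j, c j = d := Finset.Nat.mem_antidiagonalTuple.mp hc
    have hc2 : ∑ j, c' j = d := Finset.Nat.mem_antidiagonalTuple.mp hc'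
    have hvw : v = w := by
      by_contra hne
      have hlt := hsep v hv w hw hne
      have hle : ∑ j, Nat.dist (v j) (w j) ≤ ∑ j, (c j + c' j) := by
        apply Finset.sum_le_sum
        intro j _
        have := hpt j
        unfold Nat.dist
        omega
      rw [Finset.sum_add_distrib, hc1, hc2] at hle
      omega
    subst hvw
    have hcc : c = c' := by
      funext j
      have := hpt j
      omega
    rw [hcc]
  have hcard : (S ×ˢ T).card ≤ U.card := Finset.card_le_card_of_injOn _ hmaps hinj
  rw [Finset.card_product] at hcard
  have hTcard : T.card = (d + n).choose n := card_antidiagonalTuple_succ n d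
  have hUcard : U.card = (3 * d + 1 + n).choose n := card_antidiagonalTuple_succ n (3 * d + 1)
  rw [hTcard, hUcard] at hcard
  have hkey := choose_three_le n d
  have hTpos : 0 < (d + n).choose n := Nat.choose_pos (by omega)
  have h3 : S.card ≤ 3 ^ n := by
    have : S.card * (d + n).choose n ≤ 3 ^ n * (d + n).choose n := le_trans hcard hkey
    exact Nat.le_of_mul_le_mul_right this hTpos
  calc S.card ≤ 3 ^ n := h3
    _ ≤ 4 ^ n := Nat.pow_le_pow_left (by norm_num) n
    _ = 4 ^ (n + 1 - 1) := by simp
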